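/- The map A ↦ (⌊chol(A)⌋, log D(chol(A))) is a bijection from the set of m×m symmetric positive definite matrices to the product of the space of strictly lower triangular m×m matrices and the space of diagonal m×m matrices; consequently (S_m⁺, d_LC) is isometric to a Euclidean space and hence is a complete separable metric space. -/

import Mathlib

open Matrix

/-- Frobenius norm of a real matrix. -/
noncomputable def frobNorm {m : ℕ} (A : Matrix (Fin m) (Fin m) ℝ) : ℝ :=
  Real.sqrt (∑ i, ∑ j, (A i j) ^ 2)

/-- Strictly lower triangular part of a matrix. -/
def strictLower {m : ℕ} (L : Matrix (Fin m) (Fin m) ℝ) : Matrix (Fin m) (Fin m) ℝ :=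
  Matrix.of fun i j => if j < i then L i j else 0

/-- Diagonal matrix whose entries are the logarithms of the diagonal of `L`. -/
noncomputable def logDiag {m : ℕ} (L : Matrix (Fin m) (Fin m) ℝ) :
    Matrix (Fin m) (Fin m) ℝ :=
  Matrix.diagonal fun i => Real.log (L i i)

/-- The Log-Cholesky distance. -/
noncomputable def dLC {m : ℕ} (chol : Matrix (Fin m) (Fin m) ℝ → Matrix (Fin m) (Fin m) ℝ)
    (A B : Matrix (Fin m) (Fin m) ℝ) : ℝ :=
  Real.sqrt (frobNorm (strictLower (chol A) - strictLower (chol B)) ^ 2 +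
    frobNorm (logDiag (chol A) - logDiag (chol B)) ^ 2)

section Aux

variable {m : ℕ}

/-- Lower triangular matrix built from data `x`: strictly-lower entries `x i j`,
diagonal entries `exp (x i i)`. -/
noncomputable def buildL (x : Fin m → Fin m → ℝ) : Matrix (Fin m) (Fin m) ℝ :=
  Matrix.of fun i j => if j < i then x i j else if i = j then Real.exp (x i i) else 0

lemma buildL_apply (x : Fin m → Fin m → ℝ) (i j : Fin m) :
    buildL x i j = if j < i then x i j else if i = j then Real.exp (x i i) else 0 := rfl

lemma buildL_lower (x : Fin m → Fin m → ℝ) (i j : Fin m) (h : i < j) : buildL x i j = 0 := by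
  rw [buildL_apply, if_neg (by exact fun hc => absurd (h.trans hc) (lt_irrefl _)),
    if_neg h.ne]

lemma buildL_strict (x : Fin m → Fin m → ℝ) (i j : Fin m) (h : j < i) : buildL x i j = x i j := by
  rw [buildL_apply, if_pos h]

lemma buildL_diag (x : Fin m → Fin m → ℝ) (i : Fin m) : buildL x i i = Real.exp (x i i) := by
  rw [buildL_apply, if_neg (lt_irrefl _), if_pos rfl]

lemma buildL_diag_pos (x : Fin m → Fin m → ℝ) (i : Fin m) : 0 < buildL x i i := by
  rw [buildL_diag]; exact Real.exp_pos _

lemma buildL_det_pos (x : Fin m → Fin m → ℝ) : 0 < (buildL x).det := by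
  rw [Matrix.det_of_lowerTriangular (buildL x)
    (by intro i j h; exact buildL_lower x i j (by simpa using h))]
  exact Finset.prod_pos fun i _ => buildL_diag_pos x i

lemma buildL_isUnit (x : Fin m → Fin m → ℝ) : IsUnit (buildL x) :=
  (Matrix.isUnit_iff_isUnit_det _).2 (isUnit_iff_ne_zero.2 (buildL_det_pos x).ne')

lemma buildL_posDef (x : Fin m → Fin m → ℝ) : (buildL x * (buildL x)ᵀ).PosDef := by
  set M := buildL x with hM
  refine Matrix.PosDef.of_dotProduct_mulVec_pos ?_ ?_
  · ext i j
    simp only [Matrix.conjTranspose_apply, Matrix.mul_apply, Matrix.transpose_apply, star_trivial]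
    exact Finset.sum_congr rfl fun k _ => mul_comm _ _
  · intro v hv
    have hw : Mᵀ *ᵥ v ≠ 0 := by
      intro hc
      apply hv
      have hinj : Function.Injective (Mᵀ.mulVec) :=
        Matrix.mulVec_injective_iff_isUnit.2 ((Matrix.isUnit_iff_isUnit_det _).2
          (by rw [Matrix.det_transpose]; exact isUnit_iff_ne_zero.2 (buildL_det_pos x).ne'))
      have := hinj (a₁ := v) (a₂ := 0) (by simpa using hc)
      simpa using this
    have key : star v ⬝ᵥ (M * Mᵀ) *ᵥ v = (Mᵀ *ᵥ v) ⬝ᵥ (Mᵀ *ᵥ v) := by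
      rw [star_trivial, ← Matrix.mulVec_mulVec, Matrix.dotProduct_mulVec,
        ← Matrix.mulVec_transpose]
    rw [key]
    have h0 : (0:ℝ) ≤ (Mᵀ *ᵥ v) ⬝ᵥ (Mᵀ *ᵥ v) :=
      Finset.sum_nonneg fun i _ => mul_self_nonneg _
    rcases h0.lt_or_eq with h | h
    · exact h
    · exact absurd ((dotProduct_self_eq_zero).1 h.symm) hw

/-- The coordinate map into Euclidean space. -/
noncomputable def psiFun (chol : Matrix (Fin m) (Fin m) ℝ → Matrix (Fin m) (Fin m) ℝ)
    (A : Matrix (Fin m) (Fin m) ℝ) : EuclideanSpace ℝ (Fin m × Fin m) :=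
  WithLp.toLp 2 fun (p : Fin m × Fin m) => if p.2 < p.1 then chol A p.1 p.2
    else if p.1 = p.2 then Real.log (chol A p.1 p.1) else 0

lemma frobNorm_sq {A : Matrix (Fin m) (Fin m) ℝ} :
    frobNorm A ^ 2 = ∑ i, ∑ j, (A i j) ^ 2 :=
  Real.sq_sqrt (Finset.sum_nonneg fun _ _ => Finset.sum_nonneg fun _ _ => sq_nonneg _)

lemma dLC_eq_dist (chol : Matrix (Fin m) (Fin m) ℝ → Matrix (Fin m) (Fin m) ℝ)
    (A B : Matrix (Fin m) (Fin m) ℝ) :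
    dLC chol A B = dist (psiFun chol A) (psiFun chol B) := by
  rw [EuclideanSpace.dist_eq, dLC, frobNorm_sq, frobNorm_sq, Fintype.sum_prod_type]
  congr 1
  rw [← Finset.sum_add_distrib]
  refine Finset.sum_congr rfl fun i _ => ?_
  rw [← Finset.sum_add_distrib]
  refine Finset.sum_congr rfl fun j _ => ?_
  rcases lt_trichotomy j i with h | h | h
  · simp [strictLower, logDiag, psiFun, Matrix.sub_apply, Matrix.diagonal_apply,
      Real.dist_eq, sq_abs, h, h.ne, h.ne']
  · subst h
    simp [strictLower, logDiag, psiFun, Matrix.sub_apply, Matrix.diagonal_apply,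
      Real.dist_eq, sq_abs]
  · simp [strictLower, logDiag, psiFun, Matrix.sub_apply, Matrix.diagonal_apply,
      Real.dist_eq, sq_abs, h, h.ne, h.ne', not_lt.2 h.le]

end Aux

/-- The map `A ↦ (⌊chol A⌋, log D(chol A))` is a bijection from the SPD matrices
onto (strictly lower triangular) × (diagonal) matrices, it is an isometry from
`(S_m⁺, d_LC)` onto that Euclidean space, and consequently `(S_m⁺, d_LC)` is
complete and separable.  Here `chol` is the (unique) Cholesky factorization map. -/
theorem log_cholesky_bijection_isometry {m : ℕ}
    (chol : Matrix (Fin m) (Fin m) ℝ → Matrix (Fin m) (Fin m) ℝ)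
    (hlow : ∀ A : Matrix (Fin m) (Fin m) ℝ, A.PosDef → ∀ i j, i < j → chol A i j = 0)
    (hdiag : ∀ A : Matrix (Fin m) (Fin m) ℝ, A.PosDef → ∀ i, 0 < chol A i i)
    (hfact : ∀ A : Matrix (Fin m) (Fin m) ℝ, A.PosDef → A = chol A * (chol A)ᵀ)
    (huniq : ∀ A : Matrix (Fin m) (Fin m) ℝ, A.PosDef →
      ∀ L : Matrix (Fin m) (Fin m) ℝ, (∀ i j, i < j → L i j = 0) → (∀ i, 0 < L i i) →
        A = L * Lᵀ → L = chol A) :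
    -- bijection onto strictly-lower-triangular × diagonal matrices
    Set.BijOn (fun A => (strictLower (chol A), logDiag (chol A)))
      {A : Matrix (Fin m) (Fin m) ℝ | A.PosDef}
      ({L : Matrix (Fin m) (Fin m) ℝ | ∀ i j : Fin m, i ≤ j → L i j = 0} ×ˢ
        {D : Matrix (Fin m) (Fin m) ℝ | ∀ i j : Fin m, i ≠ j → D i j = 0}) ∧
    -- the map is an isometry onto the Euclidean (Frobenius) product space
    (∀ A B : Matrix (Fin m) (Fin m) ℝ, A.PosDef → B.PosDef →
      dLC chol A B = Real.sqrt (frobNorm (strictLower (chol A) - strictLower (chol B)) ^ 2 +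
        frobNorm (logDiag (chol A) - logDiag (chol B)) ^ 2)) ∧
    -- completeness of (S_m⁺, d_LC)
    (∀ f : ℕ → Matrix (Fin m) (Fin m) ℝ, (∀ k, (f k).PosDef) →
      (∀ ε : ℝ, 0 < ε → ∃ N, ∀ p q, N ≤ p → N ≤ q → dLC chol (f p) (f q) < ε) →
      ∃ A : Matrix (Fin m) (Fin m) ℝ, A.PosDef ∧
        ∀ ε : ℝ, 0 < ε → ∃ N, ∀ k, N ≤ k → dLC chol (f k) A < ε) ∧
    -- separability of (S_m⁺, d_LC)
    (∃ s : Set (Matrix (Fin m) (Fin m) ℝ), s.Countable ∧ (∀ B ∈ s, B.PosDef) ∧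
      ∀ A : Matrix (Fin m) (Fin m) ℝ, A.PosDef → ∀ ε : ℝ, 0 < ε →
        ∃ B ∈ s, dLC chol A B < ε) := by
  have key : ∀ x : Fin m → Fin m → ℝ, chol (buildL x * (buildL x)ᵀ) = buildL x := fun x =>
    (huniq _ (buildL_posDef x) _ (fun i j h => buildL_lower x i j h)
      (fun i => buildL_diag_pos x i) rfl).symm
  refine ⟨⟨?_, ?_, ?_⟩, fun A B _ _ => rfl, ?_, ?_⟩
  · -- MapsTo
    intro A _
    constructor
    · intro i j hij
      simp only [strictLower, Matrix.of_apply]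
      rw [if_neg (not_lt.2 hij)]
    · intro i j hij
      exact Matrix.diagonal_apply_ne _ hij
  · -- InjOn
    intro A hA B hB hAB
    have h1 : strictLower (chol A) = strictLower (chol B) := congrArg Prod.fst hAB
    have h2 : logDiag (chol A) = logDiag (chol B) := congrArg Prod.snd hAB
    have hchol : chol A = chol B := by
      ext i j
      rcases lt_trichotomy j i with h | h | h
      · have := congrFun (congrFun h1 i) j
        simpa [strictLower, if_pos h] using this
      · subst h
        have := congrFun (congrFun h2 j) j
        simp only [logDiag, Matrix.diagonal_apply_eq] at this
        have := congrArg Real.exp this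
        rwa [Real.exp_log (hdiag A hA j), Real.exp_log (hdiag B hB j)] at this
      · rw [hlow A hA i j h, hlow B hB i j h]
    rw [hfact A hA, hfact B hB, hchol]
  · -- SurjOn
    rintro ⟨P, Q⟩ ⟨hP, hQ⟩
    simp only [Set.mem_setOf_eq] at hP hQ
    set x : Fin m → Fin m → ℝ := fun i j => if i = j then Q i i else P i j with hx
    refine ⟨buildL x * (buildL x)ᵀ, buildL_posDef x, ?_⟩
    simp only [key, Prod.mk.injEq]
    constructor
    · ext i j
      simp only [strictLower, Matrix.of_apply]
      rcases lt_or_ge j i with h | h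
      · rw [if_pos h, buildL_strict x i j h, hx]
        simp [h.ne']
      · rw [if_neg (not_lt.2 h), hP i j h]
    · ext i j
      rcases eq_or_ne i j with h | h
      · subst h
        simp only [logDiag, Matrix.diagonal_apply_eq, buildL_diag, Real.log_exp, hx]
        simp
      · simp only [logDiag]
        rw [Matrix.diagonal_apply_ne _ h, hQ i j h]
  · -- completeness
    intro f hf hcauchy
    have hC : CauchySeq (fun k => psiFun chol (f k)) := by
      rw [Metric.cauchySeq_iff]
      intro ε hε
      obtain ⟨N, hN⟩ := hcauchy ε hε
      exact ⟨N, fun p hp q hq => by rw [← dLC_eq_dist]; exact hN p q hp hq⟩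
    obtain ⟨x, hx⟩ := cauchySeq_tendsto_of_complete hC
    have hx0 : ∀ i j : Fin m, i < j → x (i, j) = 0 := by
      intro i j hij
      have h1 : Filter.Tendsto (fun k => psiFun chol (f k) (i, j)) Filter.atTop
          (nhds (x (i, j))) :=
        ((EuclideanSpace.proj ((i, j) : Fin m × Fin m)).continuous.tendsto x).comp hx
      have h2 : ∀ k, psiFun chol (f k) (i, j) = 0 := by
        intro k
        simp only [psiFun, PiLp.toLp_apply]
        rw [if_neg (by exact fun hc => absurd (hij.trans hc) (lt_irrefl _)), if_neg hij.ne]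
      simp only [h2] at h1
      exact (tendsto_nhds_unique tendsto_const_nhds h1).symm
    set y : Fin m → Fin m → ℝ := fun i j => x (i, j) with hy
    refine ⟨buildL y * (buildL y)ᵀ, buildL_posDef y, ?_⟩
    have hpsi : psiFun chol (buildL y * (buildL y)ᵀ) = x := by
      ext p
      obtain ⟨i, j⟩ := p
      simp only [psiFun, key, PiLp.toLp_apply]
      rcases lt_trichotomy j i with h | h | h
      · rw [if_pos h, buildL_strict y i j h]
      · subst h
        rw [if_neg (lt_irrefl _), if_pos rfl, buildL_diag, Real.log_exp]
      · rw [if_neg (by exact fun hc => absurd (h.trans hc) (lt_irrefl _)), if_neg h.ne,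
          hx0 i j h]
    intro ε hε
    obtain ⟨N, hN⟩ := Metric.tendsto_atTop.1 hx ε hε
    exact ⟨N, fun k hk => by rw [dLC_eq_dist, hpsi]; exact hN k hk⟩
  · -- separability
    refine ⟨Set.range (fun q : Fin m → Fin m → ℚ =>
        buildL (fun i j => (q i j : ℝ)) * (buildL (fun i j => (q i j : ℝ)))ᵀ),
      Set.countable_range _, by rintro B ⟨q, rfl⟩; exact buildL_posDef _, ?_⟩
    intro A hA ε hε
    set δ : ℝ := ε / (m + 1) with hδdef
    have hδ : 0 < δ := by positivity
    have hq : ∀ p : Fin m × Fin m, ∃ q : ℚ, |psiFun chol A p - (q : ℝ)| < δ := fun p =>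
      exists_rat_near _ hδ
    choose q hqlt using hq
    set q' : Fin m → Fin m → ℚ := fun i j => q (i, j) with hq'
    refine ⟨buildL (fun i j => (q' i j : ℝ)) * (buildL (fun i j => (q' i j : ℝ)))ᵀ,
      ⟨q', rfl⟩, ?_⟩
    rw [dLC_eq_dist, EuclideanSpace.dist_eq]
    have hb : ∀ p : Fin m × Fin m,
        dist (psiFun chol A p)
          (psiFun chol (buildL (fun i j => (q' i j : ℝ)) *
            (buildL (fun i j => (q' i j : ℝ)))ᵀ) p) ^ 2 ≤ δ ^ 2 := by
      intro p
      obtain ⟨i, j⟩ := p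
      have hB : psiFun chol (buildL (fun i j => (q' i j : ℝ)) *
          (buildL (fun i j => (q' i j : ℝ)))ᵀ) (i, j) =
          if (j : Fin m) < i ∨ i = j then (q' i j : ℝ) else 0 := by
        simp only [psiFun, key, PiLp.toLp_apply]
        rcases lt_trichotomy j i with h | h | h
        · rw [if_pos h, buildL_strict _ i j h, if_pos (Or.inl h)]
        · subst h
          rw [if_neg (lt_irrefl _), if_pos rfl, buildL_diag, Real.log_exp,
            if_pos (Or.inr rfl)]
        · rw [if_neg (by exact fun hc => absurd (h.trans hc) (lt_irrefl _)), if_neg h.ne,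
            if_neg (by push_neg; exact ⟨h.le, h.ne⟩)]
      rw [hB]
      have hle : dist (psiFun chol A (i, j))
          (if (j : Fin m) < i ∨ i = j then (q' i j : ℝ) else 0) ≤ δ := by
        by_cases hc : (j : Fin m) < i ∨ i = j
        · rw [if_pos hc, Real.dist_eq]
          exact (hqlt (i, j)).le
        · rw [if_neg hc]
          push_neg at hc
          have hA0 : psiFun chol A (i, j) = 0 := by
            simp only [psiFun, PiLp.toLp_apply]
            rw [if_neg (not_lt.2 hc.1), if_neg hc.2]
          rw [hA0, dist_self]
          exact hδ.le
      exact pow_le_pow_left₀ dist_nonneg hle 2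
    have hsum : ∑ p : Fin m × Fin m, dist (psiFun chol A p)
        (psiFun chol (buildL (fun i j => (q' i j : ℝ)) *
          (buildL (fun i j => (q' i j : ℝ)))ᵀ) p) ^ 2 ≤ (m * m : ℝ) * δ ^ 2 := by
      calc _ ≤ (Finset.univ : Finset (Fin m × Fin m)).card • δ ^ 2 :=
            Finset.sum_le_card_nsmul _ _ _ fun p _ => hb p
        _ = (m * m : ℝ) * δ ^ 2 := by
            simp [Finset.card_univ, nsmul_eq_mul]
    have hsq : Real.sqrt ((m * m : ℝ) * δ ^ 2) = m * δ := by
      rw [show (m * m : ℝ) * δ ^ 2 = (m * δ) ^ 2 by ring, Real.sqrt_sq (by positivity)]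
    have hlt : (m : ℝ) * δ < ε := by
      rw [hδdef]
      have h1 : (m : ℝ) / (m + 1) < 1 := by
        rw [div_lt_one (by positivity)]; linarith
      calc (m : ℝ) * (ε / (m + 1)) = ((m : ℝ) / (m + 1)) * ε := by ring
        _ < 1 * ε := mul_lt_mul_of_pos_right h1 hε
        _ = ε := one_mul ε
    exact lt_of_le_of_lt (hsq ▸ Real.sqrt_le_sqrt hsum) hlt
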